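/- Let F be an admissible Finsler structure on Ω, δ_F its intrinsic distance, and d_c* the intrinsic distance of the dual F*. Suppose at a point x ∈ Ω: (a) lim_{y→x} δ_F(x,y)/d_c*(x,y) = 1, (b) Δ_{d_c*}(x,v) ≤ F*(x,v) for all v, and (c) F(x,·) = (F*)*(x,·). If u is Lipschitz, differentiable at x, and Lip_{δ_F} u(x) ≤ 1, then F(x, ∇u(x)) ≤ 1. -/

import Mathlib

open MeasureTheory Filter Topology Set

/-- The dual Finsler structure `F*(x,w) := sup {⟨v,w⟩ : F(x,v) ≤ 1}`. -/
noncomputable def finslerDual {n : ℕ} (F : EuclideanSpace ℝ (Fin n) → EuclideanSpace ℝ (Fin n) → ℝ)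
    (x w : EuclideanSpace ℝ (Fin n)) : ℝ :=
  sSup ((fun v => (inner ℝ v w : ℝ)) '' {v | F x v ≤ 1})

/-- at a point `x` where (a) `δ_F(x,y)/d_c*(x,y) → 1` as `y → x`,
(b) the metric derivative `Δ_{d_c*}(x,v) ≤ F*(x,v)` for all `v`, and (c) `F(x,·)`
equals its bidual, any Lipschitz function `u` differentiable at `x` with
`Lip_{δ_F} u(x) ≤ 1` satisfies `F(x,∇u(x)) ≤ 1`. -/
theorem stmt10 {n : ℕ} (hn : 2 ≤ n) (Ω : Set (EuclideanSpace ℝ (Fin n)))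
    (hΩopen : IsOpen Ω)
    (F : EuclideanSpace ℝ (Fin n) → EuclideanSpace ℝ (Fin n) → ℝ)
    (δF d : EuclideanSpace ℝ (Fin n) → EuclideanSpace ℝ (Fin n) → ℝ)
    (α β : ℝ) (hα : 0 < α) (hαβ : α ≤ β)
    (hd_equiv : ∀ y z, α * ‖y - z‖ ≤ d y z ∧ d y z ≤ β * ‖y - z‖)
    (hδ_equiv : ∀ y z, α * ‖y - z‖ ≤ δF y z ∧ δF y z ≤ β * ‖y - z‖)
    (x : EuclideanSpace ℝ (Fin n)) (hx : x ∈ Ω)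
    -- (a): δ_F and d_c* agree at infinitesimal scale at x
    (ha : Filter.Tendsto (fun y => δF x y / d x y) (nhdsWithin x {x}ᶜ) (nhds 1))
    -- (b): the metric derivative of d = d_c* is dominated by the dual F*
    (hb : ∀ v : EuclideanSpace ℝ (Fin n),
      Filter.limsup (fun t : ℝ => d x (x + t • v) / t) (nhdsWithin 0 (Set.Ioi 0))
        ≤ finslerDual F x v)
    -- (c): F(x,·) coincides with its bidual
    (hc : ∀ v, F x v = finslerDual (finslerDual F) x v)
    (u : EuclideanSpace ℝ (Fin n) → ℝ) (K : NNReal) (hu : LipschitzWith K u)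
    (hdiff : DifferentiableAt ℝ u x)
    (hlip : Filter.limsup (fun y => |u y - u x| / δF x y) (nhdsWithin x {x}ᶜ) ≤ 1) :
    F x (gradient u x) ≤ 1 := by
  rw [hc]
  unfold finslerDual
  apply Real.sSup_le _ zero_le_one
  rintro a ⟨w, hw, rfl⟩
  simp only [Set.mem_setOf_eq] at hw
  -- hw : finslerDual F x w ≤ 1.  Goal: ⟪w, gradient u x⟫ ≤ 1.
  have hinner : (inner ℝ w (gradient u x) : ℝ) = fderiv ℝ u x w := by
    rw [real_inner_comm]
    exact InnerProductSpace.toDual_symm_apply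
  simp only []
  show (inner ℝ w (gradient u x) : ℝ) ≤ 1
  rw [hinner]
  rcases eq_or_ne w 0 with rfl | hw0
  · simp
  -- the directional derivative is the limit of difference quotients along t → 0⁺
  have hy : Filter.Tendsto (fun t : ℝ => x + t • w) (nhdsWithin 0 (Set.Ioi 0))
      (nhdsWithin x {x}ᶜ) := by
    apply tendsto_nhdsWithin_of_tendsto_nhds_of_eventually_within
    · have hcont : Continuous (fun t : ℝ => x + t • w) :=
        continuous_const.add (continuous_id.smul continuous_const)
      have : Filter.Tendsto (fun t : ℝ => x + t • w) (nhds 0) (nhds x) :=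
        hcont.tendsto' 0 x (by simp)
      exact this.mono_left nhdsWithin_le_nhds
    · filter_upwards [self_mem_nhdsWithin] with t ht
      simp only [Set.mem_compl_iff, Set.mem_singleton_iff]
      intro h
      have : t • w = 0 := by
        have := congrArg (· - x) h
        simpa [add_sub_cancel_left] using this
      rcases smul_eq_zero.1 this with h' | h'
      · exact absurd h' (ne_of_gt ht)
      · exact hw0 h'
  have hslope : Filter.Tendsto (fun t : ℝ => (u (x + t • w) - u x) / t)
      (nhdsWithin 0 (Set.Ioi 0)) (nhds (fderiv ℝ u x w)) := by
    have hline : HasDerivAt (fun t : ℝ => x + t • w) w 0 := by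
      simpa using ((hasDerivAt_id (0 : ℝ)).smul_const w).const_add x
    have hcomp : HasDerivAt (fun t : ℝ => u (x + t • w)) (fderiv ℝ u x w) 0 := by
      have hF : HasFDerivAt u (fderiv ℝ u x) (x + (0:ℝ) • w) := by
        simpa using hdiff.hasFDerivAt
      exact hF.comp_hasDerivAt 0 hline
    have := hasDerivAt_iff_tendsto_slope.1 hcomp
    have h2 : Filter.Tendsto (slope (fun t : ℝ => u (x + t • w)) 0)
        (nhdsWithin 0 (Set.Ioi 0)) (nhds (fderiv ℝ u x w)) :=
      this.mono_left (nhdsWithin_mono 0 (fun t ht => ne_of_gt ht))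
    refine h2.congr' ?_
    filter_upwards [self_mem_nhdsWithin] with t ht
    simp [slope, div_eq_inv_mul]
  -- main estimate: fderiv ℝ u x w ≤ (1+ε)^3 for all ε > 0
  have key : ∀ ε : ℝ, 0 < ε → fderiv ℝ u x w ≤ (1 + ε)^3 := by
    intro ε hε
    have hε1 : (1 : ℝ) < 1 + ε := by linarith
    -- factor 1 : |u y - u x| / δF x y < 1+ε eventually
    have hbdd1 : (nhdsWithin x {x}ᶜ).IsBoundedUnder (· ≤ ·)
        (fun y => |u y - u x| / δF x y) := by
      apply Filter.isBoundedUnder_of_eventually_le (a := (K : ℝ) / α)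
      filter_upwards [self_mem_nhdsWithin] with y hy'
      have hyx : y ≠ x := hy'
      have hnorm : (0 : ℝ) < ‖x - y‖ := by
        rw [norm_pos_iff]; intro h; exact hyx (sub_eq_zero.1 h).symm
      have hδpos : 0 < δF x y := lt_of_lt_of_le (by positivity) (hδ_equiv x y).1
      have hnum : |u y - u x| ≤ (K : ℝ) * ‖x - y‖ := by
        have := hu.dist_le_mul y x
        rw [Real.dist_eq] at this
        calc |u y - u x| ≤ (K : ℝ) * dist y x := this
          _ = (K : ℝ) * ‖x - y‖ := by rw [dist_eq_norm, norm_sub_rev]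
      rw [div_le_div_iff₀ hδpos hα]
      calc |u y - u x| * α ≤ ((K : ℝ) * ‖x - y‖) * α := by
            apply mul_le_mul_of_nonneg_right hnum hα.le
        _ = (K : ℝ) * (α * ‖x - y‖) := by ring
        _ ≤ (K : ℝ) * δF x y := by
            apply mul_le_mul_of_nonneg_left (hδ_equiv x y).1 K.2
    have h1 : ∀ᶠ y in nhdsWithin x {x}ᶜ, |u y - u x| / δF x y < 1 + ε :=
      Filter.eventually_lt_of_limsup_lt (lt_of_le_of_lt hlip hε1) hbdd1
    -- factor 2 : δF x y / d x y < 1+ε eventually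
    have h2 : ∀ᶠ y in nhdsWithin x {x}ᶜ, δF x y / d x y < 1 + ε :=
      ha.eventually (eventually_lt_nhds hε1)
    -- factor 3 : d x (x+tw)/t < 1+ε eventually
    have hbdd3 : (nhdsWithin (0:ℝ) (Set.Ioi 0)).IsBoundedUnder (· ≤ ·)
        (fun t => d x (x + t • w) / t) := by
      apply Filter.isBoundedUnder_of_eventually_le (a := β * ‖w‖)
      filter_upwards [self_mem_nhdsWithin] with t ht
      have ht' : (0:ℝ) < t := ht
      rw [div_le_iff₀ ht']
      calc d x (x + t • w) ≤ β * ‖x - (x + t • w)‖ := (hd_equiv x (x + t • w)).2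
        _ = β * (t * ‖w‖) := by
            rw [show x - (x + t • w) = -(t • w) by abel, norm_neg, norm_smul,
              Real.norm_eq_abs, abs_of_pos ht']
        _ = β * ‖w‖ * t := by ring
    have h3 : ∀ᶠ t in nhdsWithin (0:ℝ) (Set.Ioi 0), d x (x + t • w) / t < 1 + ε :=
      Filter.eventually_lt_of_limsup_lt (lt_of_le_of_lt ((hb w).trans hw) hε1) hbdd3
    -- combine
    have hev : ∀ᶠ t in nhdsWithin (0:ℝ) (Set.Ioi 0),
        (u (x + t • w) - u x) / t ≤ (1 + ε)^3 := by
      filter_upwards [hy.eventually h1, hy.eventually h2, h3, self_mem_nhdsWithin]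
        with t H1 H2 H3 ht
      have ht' : (0:ℝ) < t := ht
      set y := x + t • w with hy'
      have hyx : y ≠ x := by
        intro h
        have : t • w = 0 := by
          have := congrArg (· - x) h
          simpa [hy', add_sub_cancel_left] using this
        rcases smul_eq_zero.1 this with h' | h'
        · exact (ne_of_gt ht') h'
        · exact hw0 h'
      have hnorm : (0 : ℝ) < ‖x - y‖ := by
        rw [norm_pos_iff]; intro h; exact hyx (sub_eq_zero.1 h).symm
      have hδpos : 0 < δF x y := lt_of_lt_of_le (by positivity) (hδ_equiv x y).1
      have hdpos : 0 < d x y := lt_of_lt_of_le (by positivity) (hd_equiv x y).1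
      have hfac : |u y - u x| / t
          = (|u y - u x| / δF x y) * (δF x y / d x y) * (d x y / t) := by
        field_simp
      calc (u y - u x) / t ≤ |u y - u x| / t :=
            div_le_div_of_nonneg_right (le_abs_self _) ht'.le
        _ = (|u y - u x| / δF x y) * (δF x y / d x y) * (d x y / t) := hfac
        _ ≤ (1 + ε) * (1 + ε) * (1 + ε) := by
            apply mul_le_mul (mul_le_mul H1.le H2.le (by positivity) (by linarith))
              H3.le (by positivity) (by positivity)
        _ = (1 + ε)^3 := by ring
    exact le_of_tendsto hslope hev
  -- conclude by letting ε → 0⁺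
  have hlim : Filter.Tendsto (fun ε : ℝ => (1 + ε)^3) (nhdsWithin 0 (Set.Ioi 0))
      (nhds 1) := by
    have hcont : Continuous (fun ε : ℝ => (1 + ε)^3) :=
      ((continuous_const.add continuous_id).pow 3)
    have : Filter.Tendsto (fun ε : ℝ => (1 + ε)^3) (nhds 0) (nhds 1) :=
      hcont.tendsto' 0 1 (by norm_num)
    exact this.mono_left nhdsWithin_le_nhds
  refine ge_of_tendsto hlim ?_
  filter_upwards [self_mem_nhdsWithin] with ε hε
  exact key ε hε
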